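/- Assume a₁σ̂ξ > a₂, let D = a₁σ̂·(a₁σ̂ξ − a₂)·(a₂ + ξ + a₂ξ), and set F* = −(√D − a₂ − a₂² + a₁σ̂ξ + a₁a₂σ̂ξ)/(a₂² − a₁a₂σ̂ξ). If a₂(1 − F*) + 1 ≠ 0, then J is differentiable at F* with J'(F*) = 1. -/

import Mathlib

/-- `J(F) = σ̂·(1 + ξF)·a₁(1 − F)/(a₂(1 − F) + 1)`. -/
noncomputable def Jfun (σ ξ a₁ a₂ F : ℝ) : ℝ :=
  σ * (1 + ξ * F) * (a₁ * (1 - F)) / (a₂ * (1 - F) + 1)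

/-- At the saddle-node point `F*`, the curve `J` is tangent to the line, i.e.
`J'(F*) = 1`. -/
theorem stmt_12 (σ ξ a₁ a₂ : ℝ)
    (hσ : 0 < σ) (hξ : 0 < ξ) (ha₁ : 0 < a₁) (ha₂ : 0 < a₂)
    (hgt : a₂ < a₁ * σ * ξ)
    (D Fstar : ℝ)
    (hD : D = a₁ * σ * (a₁ * σ * ξ - a₂) * (a₂ + ξ + a₂ * ξ))
    (hF : Fstar = -((Real.sqrt D - a₂ - a₂ ^ 2 + a₁ * σ * ξ + a₁ * a₂ * σ * ξ) /
      (a₂ ^ 2 - a₁ * a₂ * σ * ξ)))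
    (hden : a₂ * (1 - Fstar) + 1 ≠ 0) :
    HasDerivAt (Jfun σ ξ a₁ a₂) 1 Fstar := by
  have hDnn : 0 ≤ D := by
    rw [hD]
    have : 0 ≤ a₁ * σ * ξ - a₂ := by linarith
    positivity
  set s := Real.sqrt D with hsdef
  have hs : s ^ 2 = D := Real.sq_sqrt hDnn
  have hQ : a₂ ^ 2 - a₁ * a₂ * σ * ξ ≠ 0 := by nlinarith
  -- derivative of numerator
  have hid := hasDerivAt_id Fstar
  have h1 : HasDerivAt (fun F => σ * (1 + ξ * F) * (a₁ * (1 - F)))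
      (σ * ξ * (a₁ * (1 - Fstar)) + σ * (1 + ξ * Fstar) * (-a₁)) Fstar := by
    have ha : HasDerivAt (fun F : ℝ => σ * (1 + ξ * F)) (σ * ξ) Fstar := by
      have := ((hid.const_mul ξ).const_add 1).const_mul σ
      simpa using this
    have hb : HasDerivAt (fun F : ℝ => a₁ * (1 - F)) (-a₁) Fstar := by
      have := ((hid.neg.const_add 1)).const_mul a₁
      simpa [sub_eq_add_neg] using this
    exact ha.mul hb
  have h2 : HasDerivAt (fun F : ℝ => a₂ * (1 - F) + 1) (-a₂) Fstar := by
    have := (((hid.neg.const_add 1)).const_mul a₂).add_const 1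
    simpa [sub_eq_add_neg] using this
  have hdiv := h1.div h2 hden
  have key : ((σ * ξ * (a₁ * (1 - Fstar)) + σ * (1 + ξ * Fstar) * (-a₁)) *
      (a₂ * (1 - Fstar) + 1) - σ * (1 + ξ * Fstar) * (a₁ * (1 - Fstar)) * (-a₂)) /
      (a₂ * (1 - Fstar) + 1) ^ 2 = 1 := by
    rw [div_eq_one_iff_eq (pow_ne_zero 2 hden)]
    have hF' : Fstar * (a₂ ^ 2 - a₁ * a₂ * σ * ξ)
        = -(s - a₂ - a₂ ^ 2 + a₁ * σ * ξ + a₁ * a₂ * σ * ξ) := by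
      rw [hF]
      rw [neg_mul, div_mul_cancel₀ _ hQ]
    have hpoly : (a₂ + a₂ ^ 2 - a₁ * σ * ξ - a₁ * a₂ * σ * ξ
        - Fstar * (a₂ ^ 2 - a₁ * a₂ * σ * ξ)) ^ 2 = D := by
      have h : a₂ + a₂ ^ 2 - a₁ * σ * ξ - a₁ * a₂ * σ * ξ
          - Fstar * (a₂ ^ 2 - a₁ * a₂ * σ * ξ) = s := by linear_combination -hF'
      rw [h, hs]
    have hMne : a₂ * (a₁ * σ * ξ - a₂) ≠ 0 := by nlinarith
    refine mul_left_cancel₀ hMne ?_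
    linear_combination hpoly + hD
  exact key ▸ hdiv
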